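/- Let k and n be natural numbers with k ≤ n, and let (L, R, E) be a bipartite graph in which L contains every binary string of length n and |R| = 2^k. If (L, R, E) admits online matchings up to size 2^k, then every vertex y ∈ R is a neighbor of strictly more than 2^n − 2^k binary strings of length n. -/

import Mathlib

/-- A bipartite graph with left vertices `L` and edge relation `E` admits online
matchings up to size `s` if there is a strategy `g`, mapping each finite sequence of
pairwise distinct left vertices to a right vertex, such that for every sequence
`x₁, …, x_m` of pairwise distinct elements of `L` with `m ≤ s`, setting
`y_j = g(x₁, …, x_j)`, every `y_j` is a neighbor of `x_j` and the `y_j` are pairwise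
distinct. -/
def AdmitsOnlineMatching {α β : Type*} (L : Set α) (E : Set (α × β)) (s : ℕ) : Prop :=
  ∃ g : List α → β,
    ∀ xs : List α, xs.Nodup → (∀ x ∈ xs, x ∈ L) → xs.length ≤ s →
      (∀ i : Fin xs.length, (xs.get i, g (xs.take (i + 1))) ∈ E) ∧
      (∀ i j : Fin xs.length, i ≠ j → g (xs.take (i + 1)) ≠ g (xs.take (j + 1)))

lemma card_length_eq (n : ℕ) : {x : List Bool | x.length = n}.ncard = 2 ^ n := by
  have h1 : {x : List Bool | x.length = n}.ncard = Nat.card {x : List Bool | x.length = n} :=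
    (Nat.card_coe_set_eq _).symm
  have h2 : Nat.card {x : List Bool | x.length = n} = Nat.card (List.Vector Bool n) :=
    Nat.card_congr (Equiv.refl _)
  rw [h1, h2, Nat.card_eq_fintype_card, card_vector, Fintype.card_bool]


/-- first step of Makhlin's remark: let `k ≤ n` and `(L, R, E)` be a
bipartite graph with `L` containing every binary string of length `n` and `|R| = 2^k`.
If it admits online matchings up to size `2^k`, then every `y ∈ R` is a neighbor of
strictly more than `2^n - 2^k` binary strings of length `n`. -/
theorem stmt_11 {β : Type} (k n : ℕ) (hkn : k ≤ n)
    (L : Set (List Bool)) (hL : ∀ x : List Bool, x.length = n → x ∈ L)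
    (R : Set β) (hRfin : R.Finite) (hRcard : R.ncard = 2 ^ k)
    (E : Set (List Bool × β)) (hE : ∀ p ∈ E, p.1 ∈ L ∧ p.2 ∈ R)
    (hOM : AdmitsOnlineMatching L E (2 ^ k)) :
    ∀ y ∈ R, 2 ^ n - 2 ^ k < {x : List Bool | x.length = n ∧ (x, y) ∈ E}.ncard := by
  intro y hy
  by_contra hcon
  push_neg at hcon
  set A : Set (List Bool) := {x | x.length = n ∧ (x, y) ∈ E} with hA
  set C : Set (List Bool) := {x | x.length = n ∧ (x, y) ∉ E} with hC
  have hfin : {x : List Bool | x.length = n}.Finite := List.finite_length_eq Bool n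
  have hAfin : A.Finite := hfin.subset (fun x hx => hx.1)
  have hCfin : C.Finite := hfin.subset (fun x hx => hx.1)
  have hunion : A ∪ C = {x : List Bool | x.length = n} := by
    ext x; simp only [Set.mem_union, Set.mem_setOf_eq, hA, hC]; tauto
  have hdisj : Disjoint A C := by
    rw [Set.disjoint_left]; rintro x ⟨_, h1⟩ ⟨_, h2⟩; exact h2 h1
  have hsum : A.ncard + C.ncard = 2 ^ n := by
    rw [← Set.ncard_union_eq hdisj hAfin hCfin, hunion, card_length_eq]
  have hpow : 2 ^ k ≤ 2 ^ n := Nat.pow_le_pow_right (by norm_num) hkn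
  have hCcard : 2 ^ k ≤ C.ncard := by omega
  -- pick 2^k nonneighbors
  obtain ⟨t, hts, htcard⟩ := Finset.exists_subset_card_eq
    (show 2 ^ k ≤ hCfin.toFinset.card by rwa [Set.ncard_eq_toFinset_card _ hCfin] at hCcard)
  set xs : List (List Bool) := t.toList with hxs
  have hxsnodup : xs.Nodup := t.nodup_toList
  have hxslen : xs.length = 2 ^ k := by rw [hxs, Finset.length_toList, htcard]
  have hmemC : ∀ x ∈ xs, x ∈ C := by
    intro x hx
    have := hts (by rwa [hxs, Finset.mem_toList] at hx)
    rwa [Set.Finite.mem_toFinset] at this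
  obtain ⟨g, hg⟩ := hOM
  obtain ⟨hg1, hg2⟩ := hg xs hxsnodup (fun x hx => hL x (hmemC x hx).1) (le_of_eq hxslen)
  set f : Fin xs.length → β := fun i => g (xs.take (i + 1)) with hf
  have hfinj : Function.Injective f := by
    intro i j hij
    by_contra hne
    exact hg2 i j hne hij
  have hfmem : ∀ i, f i ∈ R \ {y} := by
    intro i
    refine ⟨(hE _ (hg1 i)).2, ?_⟩
    intro heq
    rw [Set.mem_singleton_iff] at heq
    exact (hmemC _ (xs.get_mem i)).2 ((show g (xs.take (i + 1)) = y from heq) ▸ hg1 i)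
  have hRy : (R \ {y}).ncard = 2 ^ k - 1 := by
    rw [Set.ncard_diff_singleton_of_mem hy, hRcard]
  have hle : 2 ^ k ≤ (R \ {y}).ncard := by
    have himg : Set.range f ⊆ R \ {y} := by rintro b ⟨i, rfl⟩; exact hfmem i
    have h1 : (Set.range f).ncard = xs.length := by
      rw [← Set.image_univ, Set.ncard_image_of_injective _ hfinj, Set.ncard_univ,
        Nat.card_eq_fintype_card, Fintype.card_fin]
    have := Set.ncard_le_ncard himg (hRfin.subset Set.diff_subset)
    rwa [h1, hxslen] at this
  have : 1 ≤ 2 ^ k := Nat.one_le_two_pow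
  omega
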